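/- Let G be a finite graph with maximum degree at most d and Φ a fractional K-partition with ∂Φ(x) ≤ ε for all x. Define p : V(G) → Prob(V(G)) by p(x)(y) = Σ_{A ∋ x,y} Φ(A)/|A|. Then Supp(p(x)) ⊆ B_K(x) (the ball of radius K around x in the graph metric), and for every vertex x, Σ_{y ~ x} ‖p(x) − p(y)‖₁ ≤ 2εd. -/

import Mathlib

open Finset

/-- The inner boundary of a finite vertex set: vertices of `A` with a neighbor outside `A`. -/
def innerBoundary {V : Type*} [Fintype V] [DecidableEq V]
    (G : SimpleGraph V) [DecidableRel G.Adj] (A : Finset V) : Finset V :=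
  A.filter (fun v => ∃ w, w ∉ A ∧ G.Adj v w)

/-- If `Φ` is a fractional `K`-partition with `∂Φ(x) ≤ ε` everywhere, then
`p(x)(y) = Σ_{A ∋ x,y} Φ(A)/|A|` is supported in the `K`-ball around `x` and
`Σ_{y ~ x} ‖p(x) − p(y)‖₁ ≤ 2εd` for every `x`. -/
theorem stmt9 {V : Type*} [Fintype V] [DecidableEq V]
    (G : SimpleGraph V) [DecidableRel G.Adj]
    (d K : ℕ) (hdeg : ∀ v, G.degree v ≤ d) (hK : 1 ≤ K)
    (ε : ℝ) (hε : 0 < ε)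
    (Φ : Finset V → ℝ) (hΦ0 : ∀ A, 0 ≤ Φ A)
    (hsupp : ∀ A, Φ A ≠ 0 → A.card ≤ K ∧ (G.induce (↑A : Set V)).Connected)
    (hpart : ∀ x : V, ∑ A ∈ univ.filter (fun A : Finset V => x ∈ A), Φ A = 1)
    (hbd : ∀ x : V,
      (∑ A ∈ univ.filter (fun A : Finset V => x ∈ innerBoundary G A), Φ A) ≤ ε)
    (p : V → V → ℝ)
    (hp : ∀ x y : V,
      p x y = ∑ A ∈ univ.filter (fun A : Finset V => x ∈ A ∧ y ∈ A), Φ A / A.card) :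
    (∀ x y : V, p x y ≠ 0 → G.Reachable x y ∧ G.dist x y ≤ K) ∧
    (∀ x : V, ∑ y ∈ G.neighborFinset x, ∑ z : V, |p x z - p y z| ≤ 2 * ε * d) := by
  constructor
  · -- support bound
    intro x y hpxy
    rw [hp] at hpxy
    obtain ⟨A, hA, hne⟩ := Finset.exists_ne_zero_of_sum_ne_zero hpxy
    simp only [mem_filter, mem_univ, true_and] at hA
    have hΦA : Φ A ≠ 0 := fun h => hne (by simp [h])
    obtain ⟨hcard, hconn⟩ := hsupp A hΦA
    have hx : (x : V) ∈ (↑A : Set V) := by exact_mod_cast hA.1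
    have hy : (y : V) ∈ (↑A : Set V) := by exact_mod_cast hA.2
    have hr : (G.induce (↑A : Set V)).Reachable ⟨x, hx⟩ ⟨y, hy⟩ :=
      hconn.preconnected _ _
    obtain ⟨w⟩ := hr
    -- replace by a path to control length
    let q := w.toPath
    have hlen : (q : (G.induce (↑A : Set V)).Walk ⟨x, hx⟩ ⟨y, hy⟩).length <
        Fintype.card (↑A : Set V) := q.2.length_lt
    have hcardA : Fintype.card (↑A : Set V) = A.card := by
      simp [Fintype.card_coe]
    have hlenK : (q : (G.induce (↑A : Set V)).Walk ⟨x, hx⟩ ⟨y, hy⟩).length ≤ K := by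
      omega
    -- map the walk into G
    let wG := (q : (G.induce (↑A : Set V)).Walk ⟨x, hx⟩ ⟨y, hy⟩).map
      (SimpleGraph.Embedding.induce (↑A : Set V)).toHom
    have hwG : wG.length ≤ K := by
      exact (SimpleGraph.Walk.length_map _ _).le.trans hlenK
    exact ⟨⟨wG⟩, le_trans (SimpleGraph.dist_le wG) hwG⟩
  · -- gradient bound
    intro x
    have key : ∀ y ∈ G.neighborFinset x, ∑ z : V, |p x z - p y z| ≤ 2 * ε := by
      intro y hy
      rw [SimpleGraph.mem_neighborFinset] at hy
      have main :
          ∑ z : V, |p x z - p y z| ≤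
            (∑ A ∈ univ.filter (fun A : Finset V => x ∈ A ∧ y ∉ A), Φ A) +
            (∑ A ∈ univ.filter (fun A : Finset V => y ∈ A ∧ x ∉ A), Φ A) := by
        have hstep : ∀ z : V, p x z - p y z =
            ∑ A : Finset V,
              ((if x ∈ A ∧ z ∈ A then Φ A / A.card else 0) -
               (if y ∈ A ∧ z ∈ A then Φ A / A.card else 0)) := by
          intro z
          rw [hp, hp, Finset.sum_filter, Finset.sum_filter, ← Finset.sum_sub_distrib]
        calc ∑ z : V, |p x z - p y z|
            ≤ ∑ z : V, ∑ A : Finset V,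
                |(if x ∈ A ∧ z ∈ A then Φ A / A.card else 0) -
                 (if y ∈ A ∧ z ∈ A then Φ A / A.card else 0)| := by
              refine Finset.sum_le_sum fun z _ => ?_
              rw [hstep z]
              exact Finset.abs_sum_le_sum_abs _ _
          _ = ∑ A : Finset V, ∑ z : V,
                |(if x ∈ A ∧ z ∈ A then Φ A / A.card else 0) -
                 (if y ∈ A ∧ z ∈ A then Φ A / A.card else 0)| := Finset.sum_comm
          _ = ∑ A : Finset V,
                ((if x ∈ A ∧ y ∉ A then Φ A else 0) +
                 (if y ∈ A ∧ x ∉ A then Φ A else 0)) := by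
              refine Finset.sum_congr rfl fun A _ => ?_
              have hcnn : 0 ≤ Φ A / A.card :=
                div_nonneg (hΦ0 A) (by positivity)
              by_cases hxA : x ∈ A <;> by_cases hyA : y ∈ A
              · simp [hxA, hyA]
              · -- x ∈ A, y ∉ A
                have hApos : (0:ℝ) < A.card ∨ Φ A = 0 := by
                  rcases eq_or_ne (Φ A) 0 with h | h
                  · exact Or.inr h
                  · exact Or.inl (by exact_mod_cast Finset.card_pos.mpr ⟨x, hxA⟩)
                have hsum : ∑ z : V, (if z ∈ A then Φ A / (A.card : ℝ) else 0) = Φ A := by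
                  rw [Finset.sum_ite_mem, Finset.univ_inter, Finset.sum_const, nsmul_eq_mul]
                  rcases hApos with h | h
                  · rw [mul_div_cancel₀ _ (ne_of_gt h)]
                  · simp [h]
                simpa [hxA, hyA, apply_ite abs, abs_of_nonneg hcnn, abs_zero] using hsum
              · -- y ∈ A, x ∉ A
                have hApos : (0:ℝ) < A.card ∨ Φ A = 0 := by
                  rcases eq_or_ne (Φ A) 0 with h | h
                  · exact Or.inr h
                  · exact Or.inl (by exact_mod_cast Finset.card_pos.mpr ⟨y, hyA⟩)
                have hsum : ∑ z : V, (if z ∈ A then Φ A / (A.card : ℝ) else 0) = Φ A := by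
                  rw [Finset.sum_ite_mem, Finset.univ_inter, Finset.sum_const, nsmul_eq_mul]
                  rcases hApos with h | h
                  · rw [mul_div_cancel₀ _ (ne_of_gt h)]
                  · simp [h]
                simpa [hxA, hyA, apply_ite abs, abs_of_nonneg hcnn, abs_zero] using hsum
              · simp [hxA, hyA]
          _ = (∑ A ∈ univ.filter (fun A : Finset V => x ∈ A ∧ y ∉ A), Φ A) +
              (∑ A ∈ univ.filter (fun A : Finset V => y ∈ A ∧ x ∉ A), Φ A) := by
              rw [Finset.sum_add_distrib, Finset.sum_filter, Finset.sum_filter]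
      have h1 : (∑ A ∈ univ.filter (fun A : Finset V => x ∈ A ∧ y ∉ A), Φ A) ≤ ε := by
        refine le_trans ?_ (hbd x)
        refine Finset.sum_le_sum_of_subset_of_nonneg ?_ (fun A _ _ => hΦ0 A)
        intro A hA
        simp only [mem_filter, mem_univ, true_and] at hA ⊢
        exact Finset.mem_filter.mpr ⟨hA.1, ⟨y, hA.2, hy⟩⟩
      have h2 : (∑ A ∈ univ.filter (fun A : Finset V => y ∈ A ∧ x ∉ A), Φ A) ≤ ε := by
        refine le_trans ?_ (hbd y)
        refine Finset.sum_le_sum_of_subset_of_nonneg ?_ (fun A _ _ => hΦ0 A)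
        intro A hA
        simp only [mem_filter, mem_univ, true_and] at hA ⊢
        exact Finset.mem_filter.mpr ⟨hA.1, ⟨x, hA.2, hy.symm⟩⟩
      linarith [main]
    calc ∑ y ∈ G.neighborFinset x, ∑ z : V, |p x z - p y z|
        ≤ ∑ _y ∈ G.neighborFinset x, 2 * ε := Finset.sum_le_sum key
      _ = (G.degree x : ℝ) * (2 * ε) := by
          rw [Finset.sum_const, nsmul_eq_mul, SimpleGraph.card_neighborFinset_eq_degree]
      _ ≤ (d : ℝ) * (2 * ε) := by
          apply mul_le_mul_of_nonneg_right _ (by positivity)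
          exact_mod_cast hdeg x
      _ = 2 * ε * d := by ring
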